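/- Let (A,[·,·]_A,ρ_A) be a Lie algebroid over M, ∇ a TM-connection on A, ad_∇ the adjoint representation of A on A[0]⊕TM[1] and ad^⊤_∇ the coadjoint representation (its dual) on T*M[0]⊕A*[1]. A pair (μ,ν) with μ: A → T*M, ν: A → ∧²T*M is an IM-2-form (i.e. ⟨μ(a),ρ_A(b)⟩ = −⟨μ(b),ρ_A(a)⟩, μ([a,b]) = ℒ_{ρ_A(a)}μ(b) − i_{ρ_A(b)}(dμ(a)+ν(a)), ν([a,b]) = ℒ_{ρ_A(a)}ν(b) − i_{ρ_A(b)}dν(a) for all a,b ∈ Γ(A)) if and only if (μ, −μ*, ν + d_{∇*}μ*) are the components of a morphism of representations up to homotopy from ad_∇ to ad^⊤_∇, where ν ∈ Ω¹(A;∧²T*M) is viewed inside Ω¹(A;Hom(TM,T*M)) and d_{∇*} is the Koszul differential of the dual connection. -/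
import Mathlib


/-!
Algebraic (Lie–Rinehart style) model of Lie algebroids and 2-term representations
up to homotopy.  The commutative ring `R` plays the role of the ring of smooth
functions `C^∞(M)` on the base, modules over `R` play the role of the modules of
sections of vector bundles over `M`, and `Derivation ℤ R R` plays the role of the
module of vector fields `Γ(TM)`.
-/

/-- A Lie algebroid over the base with function ring `R`, with module of sections `A`:
a Lie bracket on `A` together with an anchor map to vector fields (derivations of `R`),
satisfying the Leibniz rule. -/
structure LieAlgebroid (R : Type*) [CommRing R] (A : Type*) [AddCommGroup A] [Module R A] :
    Type _ where
  bracket : A → A → A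
  anchor : A →ₗ[R] Derivation ℤ R R
  bracket_add_left : ∀ a b c, bracket (a + b) c = bracket a c + bracket b c
  bracket_add_right : ∀ a b c, bracket a (b + c) = bracket a b + bracket a c
  bracket_skew : ∀ a b, bracket a b = - bracket b a
  bracket_jacobi : ∀ a b c,
    bracket a (bracket b c) = bracket (bracket a b) c + bracket b (bracket a c)
  bracket_smul : ∀ a (f : R) b, bracket a (f • b) = f • bracket a b + anchor a f • b
  anchor_bracket : ∀ a b, anchor (bracket a b) = ⁅anchor a, anchor b⁆

/-- An `A`-connection on the module (of sections) `V`, for a Lie algebroid `A`. -/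
structure Connection (R : Type*) [CommRing R] {A : Type*} [AddCommGroup A] [Module R A]
    (L : LieAlgebroid R A) (V : Type*) [AddCommGroup V] [Module R V] : Type _ where
  conn : A → V → V
  conn_add_left : ∀ a b v, conn (a + b) v = conn a v + conn b v
  conn_smul_left : ∀ (f : R) a v, conn (f • a) v = f • conn a v
  conn_add_right : ∀ a v w, conn a (v + w) = conn a v + conn a w
  conn_leibniz : ∀ a (f : R) v, conn a (f • v) = f • conn a v + L.anchor a f • v

/-- The curvature of a connection. -/
def Connection.curv {R : Type*} [CommRing R] {A : Type*} [AddCommGroup A] [Module R A]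
    {L : LieAlgebroid R A} {V : Type*} [AddCommGroup V] [Module R V]
    (D : Connection R L V) (a b : A) (v : V) : V :=
  D.conn a (D.conn b v) - D.conn b (D.conn a v) - D.conn (L.bracket a b) v

/-- A 2-term representation up to homotopy of the Lie algebroid `A` on `V₀[0] ⊕ V₁[1]`,
given by its structure operators `(∂, ∇, K)`:  a bundle map `∂ : V₀ → V₁`, a pair of
`A`-connections compatible with `∂`, and a 2-form `K` with values in `Hom(V₁, V₀)` which
is `d_{∇^Hom}`-closed and controls both curvatures. -/
structure TwoTermRUTH (R : Type*) [CommRing R] {A : Type*} [AddCommGroup A] [Module R A]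
    (L : LieAlgebroid R A)
    (V0 V1 : Type*) [AddCommGroup V0] [Module R V0] [AddCommGroup V1] [Module R V1] :
    Type _ where
  d : V0 →ₗ[R] V1
  conn0 : Connection R L V0
  conn1 : Connection R L V1
  d_conn : ∀ a v, d (conn0.conn a v) = conn1.conn a (d v)
  K : A → A → (V1 →ₗ[R] V0)
  K_add_left : ∀ a b c, K (a + b) c = K a c + K b c
  K_smul_left : ∀ (f : R) a b, K (f • a) b = f • K a b
  K_skew : ∀ a b, K a b = - K b a
  curv0 : ∀ a b v, conn0.curv a b v = - K a b (d v)
  curv1 : ∀ a b w, conn1.curv a b w = - d (K a b w)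
  dK : ∀ a b c w,
      (conn0.conn a (K b c w) - K b c (conn1.conn a w))
    - (conn0.conn b (K a c w) - K a c (conn1.conn b w))
    + (conn0.conn c (K a b w) - K a b (conn1.conn c w))
    - K (L.bracket a b) c w + K (L.bracket a c) b w - K (L.bracket b c) a w = 0

/-- A morphism of 2-term representations up to homotopy over a (Lie algebroid) morphism
`T : A → A'` of the underlying Lie algebroids, i.e. a morphism `(A, V) ⇒ (A, T^! W)`:
it is given by components `(φ₀, φ₁, Φ)` satisfying the usual four equations, in which
the structure operators of `W` are pulled back along `T`. -/
structure RUTHHomOver {R : Type*} [CommRing R]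
    {A : Type*} [AddCommGroup A] [Module R A] {A' : Type*} [AddCommGroup A'] [Module R A']
    {L : LieAlgebroid R A} {L' : LieAlgebroid R A'}
    (T : A →ₗ[R] A')
    {V0 V1 : Type*} [AddCommGroup V0] [Module R V0] [AddCommGroup V1] [Module R V1]
    {W0 W1 : Type*} [AddCommGroup W0] [Module R W0] [AddCommGroup W1] [Module R W1]
    (V : TwoTermRUTH R L V0 V1) (W : TwoTermRUTH R L' W0 W1) : Type _ where
  φ0 : V0 →ₗ[R] W0
  φ1 : V1 →ₗ[R] W1
  Φ : A →ₗ[R] (V1 →ₗ[R] W0)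
  comm_d : ∀ v, φ1 (V.d v) = W.d (φ0 v)
  comm0 : ∀ a v, W.conn0.conn (T a) (φ0 v) - φ0 (V.conn0.conn a v) = Φ a (V.d v)
  comm1 : ∀ a w, W.conn1.conn (T a) (φ1 w) - φ1 (V.conn1.conn a w) = W.d (Φ a w)
  commK : ∀ a b w,
      (W.conn0.conn (T a) (Φ b w) - Φ b (V.conn1.conn a w))
    - (W.conn0.conn (T b) (Φ a w) - Φ a (V.conn1.conn b w))
    - Φ (L.bracket a b) w
    = φ0 (V.K a b w) - W.K (T a) (T b) (φ1 w)

/-- A morphism of Lie algebroids over the identity of the base. -/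
def IsLieAlgebroidHom {R : Type*} [CommRing R]
    {A : Type*} [AddCommGroup A] [Module R A] {A' : Type*} [AddCommGroup A'] [Module R A']
    (L : LieAlgebroid R A) (L' : LieAlgebroid R A') (T : A →ₗ[R] A') : Prop :=
  (∀ a, L'.anchor (T a) = L.anchor a) ∧
  (∀ a b, T (L.bracket a b) = L'.bracket (T a) (T b))

/-!
STATEMENT 9.  Let `A` be a Lie algebroid over `M`, `∇` a `TM`-connection on `A`,
`ad_∇` the adjoint representation of `A` on `A[0] ⊕ TM[1]` and `ad^⊤_∇` the coadjoint
representation (its dual) on `T^*M[0] ⊕ A^*[1]`.  A pair `(μ, ν)` with `μ : A → T^*M`,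
`ν : A → ∧²T^*M` is an IM-2-form if and only if `(μ, −μ^*, ν + d_{∇^*}μ^*)` are the
components of a morphism of representations up to homotopy from `ad_∇` to `ad^⊤_∇`.

The module of vector fields `Γ(TM)` is modelled by `Derivation ℤ R R`; one-forms
`Γ(T^*M)` are modelled by a module `Ω1` with the duality pairing `pX`; `Γ(A^*)` is
modelled by a module `Ad` with the pairing `pA`; 2-forms `∧²T^*M` are modelled by
alternating maps `Γ(TM) → Γ(TM) → C^∞(M)`.
-/
set_option maxHeartbeats 4000000 in
theorem im_two_form_iff_ruth_morphism_ad_to_coad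
    {R : Type*} [CommRing R]
    {A : Type*} [AddCommGroup A] [Module R A]
    {Ω1 Ad : Type*} [AddCommGroup Ω1] [Module R Ω1] [AddCommGroup Ad] [Module R Ad]
    (L : LieAlgebroid R A)
    -- the tangent Lie algebroid `TM`
    (LT : LieAlgebroid R (Derivation ℤ R R))
    (hanchor : ∀ X, LT.anchor X = X)
    (hbracket : ∀ X Y, LT.bracket X Y = ⁅X, Y⁆)
    -- a `TM`-connection `∇` on `A`
    (D : Connection R LT A)
    -- duality pairings (nondegenerate)
    (pX : Ω1 →ₗ[R] Derivation ℤ R R →ₗ[R] R)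
    (pA : Ad →ₗ[R] A →ₗ[R] R)
    (sepΩ1 : ∀ ω ω' : Ω1, (∀ x, pX ω x = pX ω' x) → ω = ω')
    (sepAd : ∀ ξ ξ' : Ad, (∀ a, pA ξ a = pA ξ' a) → ξ = ξ')
    -- the adjoint representation `ad_∇` of `A` on `A[0] ⊕ TM[1]`, with `∂ = ρ_A`,
    -- the basic connection and the basic curvature
    (adrep : TwoTermRUTH R L A (Derivation ℤ R R))
    (had_d : ∀ a, adrep.d a = L.anchor a)
    (had_0 : ∀ a b, adrep.conn0.conn a b = L.bracket a b + D.conn (L.anchor b) a)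
    (had_1 : ∀ a x, adrep.conn1.conn a x = ⁅L.anchor a, x⁆ + L.anchor (D.conn x a))
    (had_K : ∀ a b x, adrep.K a b x =
        D.conn x (L.bracket a b) - L.bracket (D.conn x a) b - L.bracket a (D.conn x b)
        + D.conn (adrep.conn1.conn a x) b - D.conn (adrep.conn1.conn b x) a)
    -- the coadjoint representation `ad^⊤_∇` of `A` on `T^*M[0] ⊕ A^*[1]`, dual to
    -- `ad_∇`: structure operators `(∂^*, ∇^*, −K^*)`
    (coad : TwoTermRUTH R L Ω1 Ad)
    (hco_d : ∀ ω a, pA (coad.d ω) a = pX ω (L.anchor a))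
    (hco_0 : ∀ a ω x, pX (coad.conn0.conn a ω) x
        = L.anchor a (pX ω x) - pX ω (adrep.conn1.conn a x))
    (hco_1 : ∀ a ξ b, pA (coad.conn1.conn a ξ) b
        = L.anchor a (pA ξ b) - pA ξ (adrep.conn0.conn a b))
    (hco_K : ∀ a b ξ x, pX (coad.K a b ξ) x = - pA ξ (adrep.K a b x))
    -- the pair `(μ, ν)`
    (μ : A →ₗ[R] Ω1)
    (ν : A →ₗ[R] Derivation ℤ R R →ₗ[R] Derivation ℤ R R →ₗ[R] R)
    (hν_alt : ∀ a x, ν a x x = 0)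
    -- `μ^* : TM → A^*`,  `⟨μ^*(x), a⟩ = ⟨μ(a), x⟩`
    (mustar : Derivation ℤ R R →ₗ[R] Ad)
    (hmustar : ∀ x a, pA (mustar x) a = pX (μ a) x)
    -- the dual connection `∇^*` on `A^*`
    (dstar : Connection R LT Ad)
    (hdstar : ∀ x ξ a, pA (dstar.conn x ξ) a = x (pA ξ a) - pA ξ (D.conn x a))
    -- `Φ = ν + d_{∇^*}μ^* ∈ Ω¹(A; Hom(TM, T^*M))`
    (PhiLM : A →ₗ[R] Derivation ℤ R R →ₗ[R] Ω1)
    (hPhi : ∀ a x y, pX (PhiLM a x) y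
        = ν a x y
          + pA (dstar.conn x (mustar y) - dstar.conn y (mustar x) - mustar ⁅x, y⁆) a) :
    -- `(μ, ν)` is an IM-2-form …
    (( -- (1)  `⟨μ(a), ρ_A(b)⟩ = −⟨μ(b), ρ_A(a)⟩`
      (∀ a b, pX (μ a) (L.anchor b) = - pX (μ b) (L.anchor a)) ∧
      -- (2)  `μ([a,b]) = ℒ_{ρ_A(a)} μ(b) − i_{ρ_A(b)}(dμ(a) + ν(a))`
      (∀ a b x, pX (μ (L.bracket a b)) x =
        (L.anchor a (pX (μ b) x) - pX (μ b) ⁅L.anchor a, x⁆)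
        - ((L.anchor b) (pX (μ a) x) - x (pX (μ a) (L.anchor b))
            - pX (μ a) ⁅L.anchor b, x⁆)
        - ν a (L.anchor b) x) ∧
      -- (3)  `ν([a,b]) = ℒ_{ρ_A(a)} ν(b) − i_{ρ_A(b)} dν(a)`
      (∀ a b x y, ν (L.bracket a b) x y =
        (L.anchor a (ν b x y) - ν b ⁅L.anchor a, x⁆ y - ν b x ⁅L.anchor a, y⁆)
        - ((L.anchor b) (ν a x y) - x (ν a (L.anchor b) y) + y (ν a (L.anchor b) x)
            - ν a ⁅L.anchor b, x⁆ y + ν a ⁅L.anchor b, y⁆ x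
            - ν a ⁅x, y⁆ (L.anchor b)))) ↔
    -- … iff `(μ, −μ^*, ν + d_{∇^*}μ^*)` is a morphism `ad_∇ ⇒ ad^⊤_∇`
    (∃ G : RUTHHomOver (LinearMap.id : A →ₗ[R] A) adrep coad,
        G.φ0 = μ ∧ G.φ1 = - mustar ∧ G.Φ = PhiLM)) := by
  classical
  have hsk : ∀ (c : A) (x y : Derivation ℤ R R), ν c x y = - ν c y x := by
    intro c x y
    have h := hν_alt c (x + y)
    simp only [map_add, LinearMap.add_apply, hν_alt] at h
    linear_combination h
  constructor
  · rintro ⟨h1, h2, h3⟩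
    have h4 : ∀ (p q : A) (x : Derivation ℤ R R),
        ν p (L.anchor q) x = - ν q (L.anchor p) x := by
      intro p q x
      have hSK : pX (μ (L.bracket q p)) x = - pX (μ (L.bracket p q)) x := by
        rw [L.bracket_skew q p, map_neg, map_neg, LinearMap.neg_apply]
      have hXH1 : x (pX (μ p) (L.anchor q)) = - x (pX (μ q) (L.anchor p)) := by
        rw [h1 p q, map_neg]
      linear_combination h2 p q x + h2 q p x - hSK + hXH1
    refine ⟨⟨μ, -mustar, PhiLM, ?_, ?_, ?_, ?_⟩, rfl, rfl, rfl⟩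
    · -- comm_d
      intro v
      apply sepAd
      intro c
      simp only [LinearMap.neg_apply, map_neg, had_d, hco_d, hmustar]
      linear_combination -h1 v c
    · -- comm0
      intro a v
      apply sepΩ1
      intro x
      simp only [LinearMap.id_coe, id_eq, had_d, had_0, had_1, had_K, hco_d, hco_0,
        hco_1, hco_K, hmustar, hdstar, hPhi, h2, h3, L.anchor_bracket,
        D.conn_add_left, D.conn_add_right, map_add, map_sub, map_neg,
        LinearMap.add_apply, LinearMap.sub_apply, LinearMap.neg_apply,
        Derivation.add_apply, Derivation.sub_apply, Derivation.neg_apply,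
        Derivation.commutator_apply, lie_add, add_lie, lie_sub, sub_lie, lie_neg, neg_lie]
      linear_combination -h1 (D.conn x a) v
    · -- comm1
      intro a w
      apply sepAd
      intro c
      simp only [LinearMap.id_coe, id_eq, had_d, had_0, had_1, had_K, hco_d, hco_0,
        hco_1, hco_K, hmustar, hdstar, hPhi, h2, h3, L.anchor_bracket,
        D.conn_add_left, D.conn_add_right, map_add, map_sub, map_neg,
        LinearMap.add_apply, LinearMap.sub_apply, LinearMap.neg_apply,
        Derivation.add_apply, Derivation.sub_apply, Derivation.neg_apply,
        Derivation.commutator_apply, lie_add, add_lie, lie_sub, sub_lie, lie_neg, neg_lie]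
      have hSF : pX (μ a) ⁅L.anchor c, w⁆ = - pX (μ a) ⁅w, L.anchor c⁆ := by
        rw [← lie_skew (L.anchor c) w, map_neg]
      linear_combination h1 (D.conn w a) c + hSF - hsk a (L.anchor c) w
    · -- commK
      intro a b w
      apply sepΩ1
      intro y
      simp only [LinearMap.id_coe, id_eq, had_d, had_0, had_1, had_K, hco_d, hco_0,
        hco_1, hco_K, hmustar, hdstar, hPhi, h2, h3, L.anchor_bracket,
        D.conn_add_left, D.conn_add_right, map_add, map_sub, map_neg,
        LinearMap.add_apply, LinearMap.sub_apply, LinearMap.neg_apply,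
        Derivation.add_apply, Derivation.sub_apply, Derivation.neg_apply,
        Derivation.commutator_apply, lie_add, add_lie, lie_sub, sub_lie, lie_neg, neg_lie]
      have hYh1 : y (pX (μ (D.conn w a)) (L.anchor b))
          = - y (pX (μ b) (L.anchor (D.conn w a))) := by
        rw [h1 (D.conn w a) b, map_neg]
      have hWh1 : w (pX (μ (D.conn y a)) (L.anchor b))
          = - w (pX (μ b) (L.anchor (D.conn y a))) := by
        rw [h1 (D.conn y a) b, map_neg]
      have hSF1 : pX (μ a) ⁅L.anchor (D.conn y b), w⁆
          = - pX (μ a) ⁅w, L.anchor (D.conn y b)⁆ := by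
        rw [← lie_skew (L.anchor (D.conn y b)) w, map_neg]
      have hSF2 : pX (μ b) ⁅L.anchor (D.conn y a), w⁆
          = - pX (μ b) ⁅w, L.anchor (D.conn y a)⁆ := by
        rw [← lie_skew (L.anchor (D.conn y a)) w, map_neg]
      have hJ1 : pX (μ a) ⁅L.anchor b, ⁅w, y⁆⁆
          = pX (μ a) ⁅⁅L.anchor b, w⁆, y⁆ + pX (μ a) ⁅w, ⁅L.anchor b, y⁆⁆ := by
        rw [leibniz_lie (L.anchor b) w y, map_add]
      have hJ2 : pX (μ b) ⁅L.anchor a, ⁅w, y⁆⁆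
          = pX (μ b) ⁅⁅L.anchor a, w⁆, y⁆ + pX (μ b) ⁅w, ⁅L.anchor a, y⁆⁆ := by
        rw [leibniz_lie (L.anchor a) w y, map_add]
      linear_combination -h1 (D.conn w a) (D.conn y b) + hYh1
        + h1 (D.conn w b) (D.conn y a) - hWh1
        + hsk a ⁅L.anchor b, y⁆ w - hsk a ⁅w, y⁆ (L.anchor b)
        - hSF1 + hsk a (L.anchor (D.conn y b)) w + hJ1
        + hSF2 - hsk b (L.anchor (D.conn y a)) w - hJ2
        - h4 (D.conn w a) b y + h4 (D.conn y a) b w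
  · rintro ⟨G, hφ0, hφ1, hΦ⟩
    have h1 : ∀ a b, pX (μ a) (L.anchor b) = - pX (μ b) (L.anchor a) := by
      intro v c
      have E := congrArg (fun ξ => pA ξ c) (G.comm_d v)
      simp only [hφ0, hφ1, LinearMap.neg_apply, map_neg, had_d, hco_d, hmustar] at E
      linear_combination -E
    have h2 : ∀ a b x, pX (μ (L.bracket a b)) x =
        (L.anchor a (pX (μ b) x) - pX (μ b) ⁅L.anchor a, x⁆)
        - ((L.anchor b) (pX (μ a) x) - x (pX (μ a) (L.anchor b))
            - pX (μ a) ⁅L.anchor b, x⁆)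
        - ν a (L.anchor b) x := by
      intro a v x
      have E := congrArg (fun ω => pX ω x) (G.comm0 a v)
      simp only [hφ0, hφ1, hΦ, LinearMap.id_coe, id_eq, had_d, had_0, had_1, had_K,
        hco_d, hco_0, hco_1, hco_K, hmustar, hdstar, hPhi, L.anchor_bracket,
        D.conn_add_left, D.conn_add_right, map_add, map_sub, map_neg,
        LinearMap.add_apply, LinearMap.sub_apply, LinearMap.neg_apply,
        Derivation.add_apply, Derivation.sub_apply, Derivation.neg_apply,
        Derivation.commutator_apply, lie_add, add_lie, lie_sub, sub_lie, lie_neg,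
        neg_lie] at E
      linear_combination -E - h1 (D.conn x a) v
    have h4 : ∀ (p q : A) (x : Derivation ℤ R R),
        ν p (L.anchor q) x = - ν q (L.anchor p) x := by
      intro p q x
      have hSK : pX (μ (L.bracket q p)) x = - pX (μ (L.bracket p q)) x := by
        rw [L.bracket_skew q p, map_neg, map_neg, LinearMap.neg_apply]
      have hXH1 : x (pX (μ p) (L.anchor q)) = - x (pX (μ q) (L.anchor p)) := by
        rw [h1 p q, map_neg]
      linear_combination h2 p q x + h2 q p x - hSK + hXH1
    refine ⟨h1, h2, ?_⟩
    intro a b w y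
    have E := congrArg (fun ω => pX ω y) (G.commK a b w)
    simp only [hφ0, hφ1, hΦ, LinearMap.id_coe, id_eq, had_d, had_0, had_1, had_K,
      hco_d, hco_0, hco_1, hco_K, hmustar, hdstar, hPhi, h2, L.anchor_bracket,
      D.conn_add_left, D.conn_add_right, map_add, map_sub, map_neg,
      LinearMap.add_apply, LinearMap.sub_apply, LinearMap.neg_apply,
      Derivation.add_apply, Derivation.sub_apply, Derivation.neg_apply,
      Derivation.commutator_apply, lie_add, add_lie, lie_sub, sub_lie, lie_neg,
      neg_lie] at E
    have hYh1 : y (pX (μ (D.conn w a)) (L.anchor b))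
        = - y (pX (μ b) (L.anchor (D.conn w a))) := by
      rw [h1 (D.conn w a) b, map_neg]
    have hWh1 : w (pX (μ (D.conn y a)) (L.anchor b))
        = - w (pX (μ b) (L.anchor (D.conn y a))) := by
      rw [h1 (D.conn y a) b, map_neg]
    have hSF1 : pX (μ a) ⁅L.anchor (D.conn y b), w⁆
        = - pX (μ a) ⁅w, L.anchor (D.conn y b)⁆ := by
      rw [← lie_skew (L.anchor (D.conn y b)) w, map_neg]
    have hSF2 : pX (μ b) ⁅L.anchor (D.conn y a), w⁆
        = - pX (μ b) ⁅w, L.anchor (D.conn y a)⁆ := by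
      rw [← lie_skew (L.anchor (D.conn y a)) w, map_neg]
    have hJ1 : pX (μ a) ⁅L.anchor b, ⁅w, y⁆⁆
        = pX (μ a) ⁅⁅L.anchor b, w⁆, y⁆ + pX (μ a) ⁅w, ⁅L.anchor b, y⁆⁆ := by
      rw [leibniz_lie (L.anchor b) w y, map_add]
    have hJ2 : pX (μ b) ⁅L.anchor a, ⁅w, y⁆⁆
        = pX (μ b) ⁅⁅L.anchor a, w⁆, y⁆ + pX (μ b) ⁅w, ⁅L.anchor a, y⁆⁆ := by
      rw [leibniz_lie (L.anchor a) w y, map_add]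
    linear_combination -E - h1 (D.conn w a) (D.conn y b) + hYh1
      + h1 (D.conn w b) (D.conn y a) - hWh1
      + hsk a ⁅L.anchor b, y⁆ w - hsk a ⁅w, y⁆ (L.anchor b)
      - hSF1 + hsk a (L.anchor (D.conn y b)) w + hJ1
      + hSF2 - hsk b (L.anchor (D.conn y a)) w - hJ2
      - h4 (D.conn w a) b y + h4 (D.conn y a) b w
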